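/- For every i ∈ {1,…,k} and every index r with m_i ≤ r < m_{i+1}, one has w_r ≤ 2^{r−m_i} · w_{m_i}. -/

import Mathlib

lemma geom_aux : ∀ n : ℕ, ∑ t ∈ Finset.range n, (2:ℝ)^t = 2^n - 1 := by
  intro n
  induction n with
  | zero => simp
  | succ n ih => rw [Finset.sum_range_succ, ih]; ring

/-- Context: `n ≥ 2`, positive nondecreasing weights `w 1 ≤ ⋯ ≤ w (n-1)`,
the index set `I = {m ∈ {1,…,n−1} : ∑_{i=1}^{m−1} w i < w m}` is enumerated
as `m 1 < m 2 < ⋯ < m k`, and `m (k+1) = n`.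
Statement: for every `i ∈ {1,…,k}` and every `r` with `m i ≤ r < m (i+1)`,
`w r ≤ 2 ^ (r − m i) * w (m i)`. -/
theorem stmt_0 (n k : ℕ) (hn : 2 ≤ n) (w : ℕ → ℝ)
    (hpos : ∀ i, 1 ≤ i → i ≤ n - 1 → 0 < w i)
    (hmono : ∀ i j, 1 ≤ i → i ≤ j → j ≤ n - 1 → w i ≤ w j)
    (m : ℕ → ℕ)
    (hI : ∀ x, ((1 ≤ x ∧ x ≤ n - 1) ∧ ∑ i ∈ Finset.Icc 1 (x - 1), w i < w x) ↔
      ∃ i, 1 ≤ i ∧ i ≤ k ∧ m i = x)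
    (hsm : StrictMonoOn m (Set.Icc 1 (k + 1)))
    (hmk : m (k + 1) = n) :
    ∀ i, 1 ≤ i → i ≤ k → ∀ r, m i ≤ r → r < m (i + 1) →
      w r ≤ 2 ^ (r - m i) * w (m i) := by
  intro i hi1 hik
  obtain ⟨⟨ha1, han⟩, hsum⟩ := (hI (m i)).mpr ⟨i, hi1, hik, rfl⟩
  set a := m i with ha
  have hbn : m (i + 1) ≤ n := by
    rw [← hmk]
    exact hsm.monotoneOn ⟨by omega, by omega⟩ ⟨by omega, le_refl _⟩ (by omega)
  intro r
  induction r using Nat.strong_induction_on with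
  | _ r IH =>
    intro har hrb
    rcases eq_or_lt_of_le har with heq | hlt
    · rw [← heq]; simp
    · have hr1 : 1 ≤ r := le_trans ha1 har
      have hrn : r ≤ n - 1 := by omega
      have hnotI : ¬ (∃ j, 1 ≤ j ∧ j ≤ k ∧ m j = r) := by
        rintro ⟨j, hj1, hjk, hjr⟩
        have h1 : a < m j := hjr ▸ hlt
        have h2 : m j < m (i + 1) := hjr ▸ hrb
        have e1 : i < j := by
          by_contra h
          push_neg at h
          exact absurd (hsm.monotoneOn ⟨by omega, by omega⟩ ⟨by omega, by omega⟩ h)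
            (by omega)
        have e2 : j < i + 1 := by
          by_contra h
          push_neg at h
          exact absurd (hsm.monotoneOn ⟨by omega, by omega⟩ ⟨by omega, by omega⟩ h)
            (by omega)
        omega
      have hwr : w r ≤ ∑ j ∈ Finset.Icc 1 (r - 1), w j := by
        by_contra h
        push_neg at h
        exact hnotI ((hI r).mp ⟨⟨hr1, hrn⟩, h⟩)
      have hr0 : r - 1 + 1 = r := by omega
      have ha0 : a - 1 + 1 = a := by omega
      have hsplit : ∑ j ∈ Finset.Icc 1 (r - 1), w j
          = ∑ j ∈ Finset.Icc 1 (a - 1), w j + ∑ j ∈ Finset.Ico a r, w j := by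
        rw [← Finset.Ico_add_one_right_eq_Icc, ← Finset.Ico_add_one_right_eq_Icc, hr0, ha0]
        exact (Finset.sum_Ico_consecutive _ (by omega) (by omega)).symm
      have hmid : ∑ j ∈ Finset.Ico a r, w j ≤ (2 ^ (r - a) - 1) * w a := by
        calc ∑ j ∈ Finset.Ico a r, w j
            ≤ ∑ j ∈ Finset.Ico a r, 2 ^ (j - a) * w a := by
              apply Finset.sum_le_sum
              intro j hj
              rw [Finset.mem_Ico] at hj
              exact IH j hj.2 hj.1 (lt_trans hj.2 hrb)
          _ = (2 ^ (r - a) - 1) * w a := by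
              rw [← Finset.sum_mul, Finset.sum_Ico_eq_sum_range]
              congr 1
              rw [← geom_aux (r - a)]
              apply Finset.sum_congr rfl
              intro t _
              congr 1
              omega
      have hwa : 0 < w a := hpos a ha1 han
      have := hsplit ▸ hwr
      nlinarith [hsum, hmid]
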